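/- The formal power series M with constant term 1 satisfying M = (1 - xM)/(1 - 2xM), equivalently M - 1 = xM(2M-1), has coefficients [x^n]M = (1/n) * sum_{i=0}^{n-1} binomial(n, i) * binomial(n, i+1) * 2^i for n >= 1 (the little Schroeder numbers). -/

import Mathlib

open PowerSeries Finset

private lemma cast_choose_step (n k : ℕ) :
    ((k:ℚ)+1) * (n.choose (k+1) : ℚ) = ((n:ℚ) - (k:ℚ)) * (n.choose k : ℚ) := by
  rcases le_or_gt k n with hkn | hkn
  · have h1 := Nat.choose_succ_right_eq n k
    have h2 := congrArg (Nat.cast : ℕ → ℚ) h1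
    push_cast [Nat.cast_sub hkn] at h2
    linarith
  · have h1 : n.choose (k+1) = 0 := Nat.choose_eq_zero_of_lt (by omega)
    have h2 : n.choose k = 0 := Nat.choose_eq_zero_of_lt hkn
    simp [h1, h2]

private lemma tid (j d : ℕ) :
    (((j:ℚ)+(d:ℚ)+1) * ((j:ℚ)+(d:ℚ)+3)) * ((j+d+2).choose (j+1) : ℚ) * ((j+d+2).choose (j+2) : ℚ) * 2^(j+1)
      - 3*((j:ℚ)+(d:ℚ)+2)*(2*(j:ℚ)+2*(d:ℚ)+3) * ((j+d+1).choose (j+1) : ℚ) * ((j+d+1).choose (j+2) : ℚ) * 2^(j+1)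
      + ((j:ℚ)+(d:ℚ)+2)*((j:ℚ)+(d:ℚ)+1) * ((j+d).choose (j+1) : ℚ) * ((j+d).choose (j+2) : ℚ) * 2^(j+1)
    = 2^(j+2) * ((j+d+2).choose (j+2) : ℚ) * ((j+d).choose (j+1) : ℚ) * (((j:ℚ)+2)*((j:ℚ)+1) - ((j:ℚ)+(d:ℚ)+1)*(2*(j:ℚ)+2*(d:ℚ)+3))
      - 2^(j+1) * ((j+d+2).choose (j+1) : ℚ) * ((j+d).choose j : ℚ) * (((j:ℚ)+1)*(j:ℚ) - ((j:ℚ)+(d:ℚ)+1)*(2*(j:ℚ)+2*(d:ℚ)+3)) := by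
  have hj1 : ((j:ℚ)+1) ≠ 0 := by positivity
  have hj2 : ((j:ℚ)+2) ≠ 0 := by positivity
  have hd1 : ((d:ℚ)+1) ≠ 0 := by positivity
  set x0 : ℚ := ((j+d).choose j : ℚ) with hx0
  set x1 : ℚ := ((j+d).choose (j+1) : ℚ) with hx1
  set x2 : ℚ := ((j+d).choose (j+2) : ℚ) with hx2
  set w : ℚ := ((j+d+1).choose j : ℚ) with hw
  set y1 : ℚ := ((j+d+1).choose (j+1) : ℚ) with hy1
  set y2 : ℚ := ((j+d+1).choose (j+2) : ℚ) with hy2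
  set z1 : ℚ := ((j+d+2).choose (j+1) : ℚ) with hz1
  set z2 : ℚ := ((j+d+2).choose (j+2) : ℚ) with hz2
  have h5 : ((j:ℚ)+1) * x1 = (d:ℚ) * x0 := by
    have := cast_choose_step (j+d) j
    push_cast at this ⊢
    linarith
  have h6 : ((j:ℚ)+2) * x2 = ((d:ℚ)-1) * x1 := by
    have := cast_choose_step (j+d) (j+1)
    push_cast at this ⊢
    linarith
  have h7 : ((j:ℚ)+1) * y1 = ((d:ℚ)+1) * w := by
    have := cast_choose_step (j+d+1) j
    push_cast at this ⊢
    linarith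
  have h1 : y1 = x0 + x1 := by
    rw [hy1, hx0, hx1, show j+d+1 = (j+d)+1 from rfl, Nat.choose_succ_succ (j+d) j]
    push_cast; ring
  have h2 : y2 = x1 + x2 := by
    rw [hy2, hx1, hx2, show j+d+1 = (j+d)+1 from rfl,
      show j+2 = (j+1)+1 from rfl, Nat.choose_succ_succ (j+d) (j+1)]
    push_cast; ring
  have h3 : z1 = w + y1 := by
    rw [hz1, hw, hy1, show j+d+2 = (j+d+1)+1 from rfl, Nat.choose_succ_succ (j+d+1) j]
    push_cast; ring
  have h4 : z2 = y1 + y2 := by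
    rw [hz2, hy1, hy2, show j+d+2 = (j+d+1)+1 from rfl,
      show j+2 = (j+1)+1 from rfl, Nat.choose_succ_succ (j+d+1) (j+1)]
    push_cast; ring
  have e1 : x1 = (d:ℚ) * x0 / ((j:ℚ)+1) := by rw [eq_div_iff hj1]; linarith
  have e2 : x2 = ((d:ℚ)-1) * x1 / ((j:ℚ)+2) := by rw [eq_div_iff hj2]; linarith
  have e7 : w = ((j:ℚ)+1) * y1 / ((d:ℚ)+1) := by rw [eq_div_iff hd1]; linarith
  rw [h3, h4, e7, h1, h2, e2, e1]
  field_simp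
  ring

private def Gf (k : ℕ) : ℕ → ℚ
  | 0 => 0
  | (j+1) => 2^(j+1) * (((k+3).choose (j+1) : ℕ) : ℚ) * (((k+1).choose j : ℕ) : ℚ)
      * (((j:ℚ)+1)*(j:ℚ) - ((k:ℚ)+2)*(2*(k:ℚ)+5))

private lemma sid (k : ℕ) :
    ((k:ℚ)+2)*((k:ℚ)+4) * (∑ i ∈ range (k+3), (((k+3).choose i : ℕ) : ℚ) * (((k+3).choose (i+1) : ℕ) : ℚ) * 2^i)
  = 3*((k:ℚ)+3)*(2*(k:ℚ)+5) * (∑ i ∈ range (k+2), (((k+2).choose i : ℕ) : ℚ) * (((k+2).choose (i+1) : ℕ) : ℚ) * 2^i)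
  - ((k:ℚ)+3)*((k:ℚ)+2) * (∑ i ∈ range (k+1), (((k+1).choose i : ℕ) : ℚ) * (((k+1).choose (i+1) : ℕ) : ℚ) * 2^i) := by
  have E2 : (∑ i ∈ range (k+3), (((k+2).choose i : ℕ) : ℚ) * (((k+2).choose (i+1) : ℕ) : ℚ) * 2^i)
      = ∑ i ∈ range (k+2), (((k+2).choose i : ℕ) : ℚ) * (((k+2).choose (i+1) : ℕ) : ℚ) * 2^i := by
    rw [Finset.sum_range_succ, Nat.choose_eq_zero_of_lt (by omega : k+2 < (k+2)+1)]
    push_cast; ring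
  have E1 : (∑ i ∈ range (k+3), (((k+1).choose i : ℕ) : ℚ) * (((k+1).choose (i+1) : ℕ) : ℚ) * 2^i)
      = ∑ i ∈ range (k+1), (((k+1).choose i : ℕ) : ℚ) * (((k+1).choose (i+1) : ℕ) : ℚ) * 2^i := by
    rw [Finset.sum_range_succ, Finset.sum_range_succ,
      Nat.choose_eq_zero_of_lt (by omega : k+1 < k+2),
      Nat.choose_eq_zero_of_lt (by omega : k+1 < (k+2)+1)]
    push_cast; ring
  rw [← E2, ← E1, Finset.mul_sum, Finset.mul_sum, Finset.mul_sum, ← Finset.sum_sub_distrib,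
    ← sub_eq_zero, ← Finset.sum_sub_distrib]
  have T : ∀ i ∈ range (k+3),
      ((k:ℚ)+2)*((k:ℚ)+4) * ((((k+3).choose i : ℕ) : ℚ) * (((k+3).choose (i+1) : ℕ) : ℚ) * 2^i)
      - (3*((k:ℚ)+3)*(2*(k:ℚ)+5) * ((((k+2).choose i : ℕ) : ℚ) * (((k+2).choose (i+1) : ℕ) : ℚ) * 2^i)
        - ((k:ℚ)+3)*((k:ℚ)+2) * ((((k+1).choose i : ℕ) : ℚ) * (((k+1).choose (i+1) : ℕ) : ℚ) * 2^i))
      = Gf k (i+1) - Gf k i := by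
    intro i hi
    match i with
    | 0 =>
      simp only [Gf]
      simp [Nat.choose_one_right]
      push_cast
      ring
    | (j+1) =>
      have hjk : j ≤ k+1 := by simp only [Finset.mem_range] at hi; omega
      obtain ⟨d, hd⟩ : ∃ d, k+1 = j+d := ⟨k+1-j, by omega⟩
      have T0 := tid j d
      have e3 : j+d+2 = k+3 := by omega
      have e2 : j+d+1 = k+2 := by omega
      have e1 : j+d = k+1 := by omega
      rw [e3, e2, e1] at T0
      have hdq : (d:ℚ) = (k:ℚ)+1-(j:ℚ) := by
        have := congrArg (Nat.cast : ℕ → ℚ) hd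
        push_cast at this
        linarith
      rw [hdq] at T0
      simp only [Gf]
      push_cast
      linear_combination T0
  rw [Finset.sum_congr rfl T, Finset.sum_range_sub (Gf k)]
  simp only [Gf]
  rw [Nat.choose_eq_zero_of_lt (by omega : k+1 < k+2)]
  push_cast; ring

/-- the power series `M` with constant term 1 satisfying
`M - 1 = x M (2M - 1)` has coefficients
`[xⁿ]M = (1/n) ∑_{i=0}^{n-1} C(n,i) C(n,i+1) 2^i` for `n ≥ 1`
(the little Schröder numbers). -/
theorem little_schroeder_series_coeff (M : PowerSeries ℚ)
    (h0 : PowerSeries.constantCoeff M = 1)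
    (h : M - 1 = PowerSeries.X * M * (2 * M - 1)) :
    ∀ n : ℕ, 1 ≤ n →
      PowerSeries.coeff n M =
        (1 / (n : ℚ)) * ∑ i ∈ Finset.range n,
          (n.choose i : ℚ) * (n.choose (i + 1) : ℚ) * 2 ^ i := by
  set M' : ℚ⟦X⟧ := d⁄dX ℚ M with hM'
  have hQ : 2*X*M^2 - (1+X)*M + 1 = 0 := by linear_combination -h
  have hD : 4*X*M*M' + 2*M^2 - (1+X)*M' - M = 0 := by
    have h2 : d⁄dX ℚ (2*X*M^2 - (1+X)*M + 1) = 0 := by rw [hQ]; simp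
    have h3 : (d⁄dX ℚ) (2:ℚ⟦X⟧) = 0 := by
      rw [show (2:ℚ⟦X⟧) = (1:ℚ⟦X⟧)+1 by norm_num]; simp
    simp only [map_sub, map_add, map_one, Derivation.leibniz, Derivation.leibniz_pow,
      derivative_X, smul_eq_mul, Derivation.map_one_eq_zero, h3,
      pow_one, nsmul_eq_mul] at h2
    linear_combination h2
  have ODE : X^3*M' + X*M' + M + X = 6*(X^2*M') + 3*(X*M) + 1 := by
    linear_combination (X*(4*X*M - 1 - X)) * hD + (X - 1 - 4*X*M - 8*X^2*M') * hQ
  have hC6 : (6:ℚ⟦X⟧) = C (6:ℚ) := (map_ofNat (C (R := ℚ)) 6).symm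
  have hC3 : (3:ℚ⟦X⟧) = C (3:ℚ) := (map_ofNat (C (R := ℚ)) 3).symm
  -- coefficient 1
  have ha1 : coeff 1 M = 1 := by
    have hc := congrArg (coeff 1) ODE
    simp only [map_add, hC6, hC3, coeff_C_mul] at hc
    rw [show (1:ℕ) = 0+1 by omega] at hc
    rw [coeff_succ_X_mul, coeff_succ_X_mul, coeff_derivative] at hc
    rw [coeff_X_pow_mul' M' 3 (0+1), coeff_X_pow_mul' M' 2 (0+1)] at hc
    rw [if_neg (by omega), if_neg (by omega), coeff_X, if_pos (by omega),
      coeff_one, if_neg (by omega), coeff_zero_eq_constantCoeff, h0] at hc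
    push_cast at hc
    linarith
  -- coefficient 2
  have ha2 : coeff 2 M = 3 := by
    have hc := congrArg (coeff 2) ODE
    simp only [map_add, hC6, hC3, coeff_C_mul] at hc
    rw [show (2:ℕ) = 1+1 by omega] at hc
    rw [coeff_succ_X_mul, coeff_succ_X_mul, coeff_derivative] at hc
    rw [coeff_X_pow_mul' M' 3 (1+1), coeff_X_pow_mul' M' 2 (1+1)] at hc
    rw [if_neg (by omega), if_pos (by omega), coeff_X, if_neg (by omega),
      coeff_one, if_neg (by omega)] at hc
    rw [show (1+1-2 : ℕ) = 0 by omega, coeff_derivative] at hc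
    rw [show (0:ℕ)+1 = 1 by norm_num, show (1:ℕ)+1 = 2 by norm_num, ha1] at hc
    norm_num at hc
    linarith
  -- three-term recurrence
  have recA : ∀ k : ℕ, ((k:ℚ)+4) * coeff (k+3) M
      = (6*(k:ℚ)+15) * coeff (k+2) M - ((k:ℚ)+1) * coeff (k+1) M := by
    intro k
    have hc := congrArg (coeff (k+3)) ODE
    simp only [map_add, hC6, hC3, coeff_C_mul] at hc
    have c3 : coeff (k+3) (X^3*M') = ((k:ℚ)+1) * coeff (k+1) M := by
      rw [coeff_X_pow_mul, coeff_derivative]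
      push_cast; ring
    have c1 : coeff (k+3) (X*M') = ((k:ℚ)+3) * coeff (k+3) M := by
      rw [show k+3 = (k+2)+1 by omega, coeff_succ_X_mul, coeff_derivative]
      push_cast; ring
    have c2 : coeff (k+3) (X^2*M') = ((k:ℚ)+2) * coeff (k+2) M := by
      rw [show k+3 = (k+1)+2 by omega, coeff_X_pow_mul, coeff_derivative,
        show (k+1)+1 = k+2 by omega]
      push_cast; ring
    have cm : coeff (k+3) (X*M) = coeff (k+2) M := by
      rw [show k+3 = (k+2)+1 by omega, coeff_succ_X_mul]
    have cone : coeff (k+3) (1:ℚ⟦X⟧) = 0 := by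
      rw [coeff_one, if_neg (by omega)]
    have cx : coeff (k+3) (X:ℚ⟦X⟧) = 0 := by
      rw [coeff_X, if_neg (by omega)]
    rw [c3, c1, c2, cm, cone, cx] at hc
    linarith
  -- main induction
  intro n
  induction n using Nat.strong_induction_on with
  | _ n IH =>
    match n with
    | 0 => intro hn; exact absurd hn (by omega)
    | 1 =>
      intro _
      rw [Finset.sum_range_one]
      simp [ha1]
    | 2 =>
      intro _
      rw [Finset.sum_range_succ, Finset.sum_range_one]
      rw [ha2]
      norm_num [Nat.choose]
    | (k+3) =>
      intro _
      have i2 : ((k:ℚ)+2) * coeff (k+2) M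
          = ∑ i ∈ Finset.range (k+2), (((k+2).choose i : ℕ) : ℚ) * (((k+2).choose (i+1) : ℕ) : ℚ) * 2^i := by
        have := IH (k+2) (by omega) (by omega)
        rw [this]
        have : ((k:ℚ)+2) ≠ 0 := by positivity
        push_cast
        field_simp
      have i1 : ((k:ℚ)+1) * coeff (k+1) M
          = ∑ i ∈ Finset.range (k+1), (((k+1).choose i : ℕ) : ℚ) * (((k+1).choose (i+1) : ℕ) : ℚ) * 2^i := by
        have := IH (k+1) (by omega) (by omega)
        rw [this]
        have : ((k:ℚ)+1) ≠ 0 := by positivity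
        push_cast
        field_simp
      have r := recA k
      have s := sid k
      have target' : ((k:ℚ)+3) * coeff (k+3) M
          = ∑ i ∈ Finset.range (k+3), (((k+3).choose i : ℕ) : ℚ) * (((k+3).choose (i+1) : ℕ) : ℚ) * 2^i := by
        have hne : ((k:ℚ)+2)*((k:ℚ)+4) ≠ 0 := by positivity
        apply mul_left_cancel₀ hne
        linear_combination ((k:ℚ)+3)*((k:ℚ)+2)*r - s + ((k:ℚ)+3)*(6*(k:ℚ)+15)*i2
          - ((k:ℚ)+3)*((k:ℚ)+2)*i1
      have h3 : ((k:ℚ)+3) ≠ 0 := by positivity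
      rw [eq_comm, ← sub_eq_zero]
      push_cast at target' ⊢
      field_simp at target' ⊢
      linarith [target']
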